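/- If nonlinear contravariant connections (D, †D), written locally with coefficient matrices A^i_s and K^i_s, are associated (π^{is} A^j_s = π^{js} K^i_s) and †D is torsion-free (∂K^i_s/∂ξ_j − ∂K^j_s/∂ξ_i − ∂π^{ij}/∂x^s = 0), then D is Poisson: π^{ms} ∂π^{ij}/∂x^s − (∂A^m_s/∂ξ_i) π^{sj} − (∂A^m_s/∂ξ_j) π^{is} = 0. -/

import Mathlib

/-- Partial derivative in the base (`x`) direction, `p = (x, ξ)`. -/
noncomputable def pdx {n : ℕ} (k : Fin n)
    (f : (Fin n → ℝ) × (Fin n → ℝ) → ℝ) (p : (Fin n → ℝ) × (Fin n → ℝ)) : ℝ :=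
  fderiv ℝ f p (Pi.single k 1, 0)

/-- Partial derivative in the fibre (`ξ`) direction. -/
noncomputable def pdxi {n : ℕ} (k : Fin n)
    (f : (Fin n → ℝ) × (Fin n → ℝ) → ℝ) (p : (Fin n → ℝ) × (Fin n → ℝ)) : ℝ :=
  fderiv ℝ f p (0, Pi.single k 1)

/-- Partial derivative of a function of `x` only. -/
noncomputable def pd {n : ℕ} (k : Fin n) (f : (Fin n → ℝ) → ℝ) (x : Fin n → ℝ) : ℝ :=
  fderiv ℝ f x (Pi.single k 1)

lemma pdxi_base_mul {n : ℕ} (k : Fin n) (g : (Fin n → ℝ) → ℝ)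
    (f : (Fin n → ℝ) × (Fin n → ℝ) → ℝ)
    (hg : ContDiff ℝ (⊤ : ℕ∞) g) (hf : ContDiff ℝ (⊤ : ℕ∞) f)
    (p : (Fin n → ℝ) × (Fin n → ℝ)) :
    pdxi k (fun q => g q.1 * f q) p = g p.1 * pdxi k f p := by
  have hgd : DifferentiableAt ℝ (fun q : (Fin n → ℝ) × (Fin n → ℝ) => g q.1) p :=
    (((hg.differentiable (by simp)).comp differentiable_fst) p)
  have hfd : DifferentiableAt ℝ f p := (hf.differentiable (by simp)).differentiableAt
  have h0 : fderiv ℝ (fun q : (Fin n → ℝ) × (Fin n → ℝ) => g q.1) p (0, Pi.single k 1) = 0 := by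
    have hcomp : HasFDerivAt (fun q : (Fin n → ℝ) × (Fin n → ℝ) => g q.1)
        ((fderiv ℝ g p.1).comp (ContinuousLinearMap.fst ℝ (Fin n → ℝ) (Fin n → ℝ))) p :=
      ((hg.differentiable (by simp)).differentiableAt.hasFDerivAt).comp p hasFDerivAt_fst
    rw [hcomp.fderiv]
    simp
  simp [pdxi, fderiv_fun_mul hgd hfd, h0]

lemma pdxi_sum {n : ℕ} (k : Fin n) (F : Fin n → (Fin n → ℝ) × (Fin n → ℝ) → ℝ)
    (hF : ∀ s, ContDiff ℝ (⊤ : ℕ∞) (F s)) (p : (Fin n → ℝ) × (Fin n → ℝ)) :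
    pdxi k (fun q => ∑ s, F s q) p = ∑ s, pdxi k (F s) p := by
  unfold pdxi
  rw [fderiv_fun_sum (fun s _ => ((hF s).differentiable (by simp)).differentiableAt)]
  simp

/-- If nonlinear contravariant connections `(D, †D)` with matrices `A`, `K` are
associated (`π^{is} A^j_s = π^{js} K^i_s`) and `†D` is torsion-free
(`∂K^i_s/∂ξ_j − ∂K^j_s/∂ξ_i − ∂π^{ij}/∂x^s = 0`), then `D` is Poisson:
`π^{ms} ∂π^{ij}/∂x^s − (∂A^m_s/∂ξ_i) π^{sj} − (∂A^m_s/∂ξ_j) π^{is} = 0`. -/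
theorem associated_torsion_free_implies_poisson
    (n : ℕ) (π : Fin n → Fin n → (Fin n → ℝ) → ℝ)
    (A K : Fin n → Fin n → (Fin n → ℝ) × (Fin n → ℝ) → ℝ)
    (hπ : ∀ i j, ContDiff ℝ (⊤ : ℕ∞) (π i j))
    (hanti : ∀ i j (x : Fin n → ℝ), π i j x = -π j i x)
    (hJac : ∀ i j l (x : Fin n → ℝ),
      ∑ s, (π i s x * pd s (π j l) x + π j s x * pd s (π l i) x
            + π l s x * pd s (π i j) x) = 0)
    (hA : ∀ i s, ContDiff ℝ (⊤ : ℕ∞) (A i s))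
    (hK : ∀ i s, ContDiff ℝ (⊤ : ℕ∞) (K i s))
    (hassoc : ∀ i j (p : (Fin n → ℝ) × (Fin n → ℝ)),
      ∑ s, π i s p.1 * A j s p = ∑ s, π j s p.1 * K i s p)
    (htf : ∀ i j s (p : (Fin n → ℝ) × (Fin n → ℝ)),
      pdxi j (K i s) p - pdxi i (K j s) p - pd s (π i j) p.1 = 0) :
    ∀ m i j (p : (Fin n → ℝ) × (Fin n → ℝ)),
      ∑ s, π m s p.1 * pd s (π i j) p.1
        - ∑ s, pdxi i (A m s) p * π s j p.1
        - ∑ s, pdxi j (A m s) p * π i s p.1 = 0 := by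
  intro m i j p
  -- differentiated association identity
  have key : ∀ a b (k : Fin n),
      ∑ s, π a s p.1 * pdxi k (A b s) p = ∑ s, π b s p.1 * pdxi k (K a s) p := by
    intro a b k
    have hfun : (fun q : (Fin n → ℝ) × (Fin n → ℝ) => ∑ s, π a s q.1 * A b s q)
        = fun q => ∑ s, π b s q.1 * K a s q := funext (hassoc a b)
    have hL : pdxi k (fun q : (Fin n → ℝ) × (Fin n → ℝ) => ∑ s, π a s q.1 * A b s q) p
        = ∑ s, π a s p.1 * pdxi k (A b s) p := by
      rw [pdxi_sum k (fun s q => π a s q.1 * A b s q) (fun s => ((hπ a s).comp contDiff_fst).mul (hA b s)) p]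
      exact Finset.sum_congr rfl fun s _ => pdxi_base_mul k (π a s) (A b s) (hπ a s) (hA b s) p
    have hR : pdxi k (fun q : (Fin n → ℝ) × (Fin n → ℝ) => ∑ s, π b s q.1 * K a s q) p
        = ∑ s, π b s p.1 * pdxi k (K a s) p := by
      rw [pdxi_sum k (fun s q => π b s q.1 * K a s q) (fun s => ((hπ b s).comp contDiff_fst).mul (hK a s)) p]
      exact Finset.sum_congr rfl fun s _ => pdxi_base_mul k (π b s) (K a s) (hπ b s) (hK a s) p
    rw [← hL, ← hR, hfun]
  have e2 : ∑ s, pdxi i (A m s) p * π s j p.1 = -∑ s, π m s p.1 * pdxi i (K j s) p := by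
    rw [← key j m i, ← Finset.sum_neg_distrib]
    exact Finset.sum_congr rfl fun s _ => by rw [hanti s j]; ring
  have e3 : ∑ s, pdxi j (A m s) p * π i s p.1 = ∑ s, π m s p.1 * pdxi j (K i s) p := by
    rw [← key i m j]
    exact Finset.sum_congr rfl fun s _ => by ring
  rw [e2, e3, sub_neg_eq_add, ← Finset.sum_add_distrib, ← Finset.sum_sub_distrib]
  apply Finset.sum_eq_zero
  intro s _
  have h := htf i j s p
  linear_combination (-(π m s p.1)) * h
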